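/- A cyclic group G of order n = p₁^{r₁} ⋯ p_m^{r_m}, where p₁,…,p_m are distinct primes, possesses a structure of (t−1)-invertible Λ-module satisfying t^k·v = v for all v ∈ G if and only if for each i = 1,…,m there exists an element a_i of the field ℤ/p_iℤ with a_i ≠ 1 and 1 + a_i + a_i² + ⋯ + a_i^{k−1} = 0. -/

import Mathlib

private lemma units_equiv (N k : ℕ) [NeZero N] (hk : 1 ≤ k) :
    (∃ h : ZMod N ≃+ ZMod N,
        Function.Bijective (fun v => h v - v) ∧ ∀ v, (⇑h)^[k] v = v) ↔
      ∃ u : ZMod N, u ^ k = 1 ∧ IsUnit (u - 1) := by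
  constructor
  · rintro ⟨h, hbij, hit⟩
    set u := h 1 with hu
    have key : ∀ v : ZMod N, h v = u * v := by
      intro v
      have h1 : v = (v.val : ZMod N) := (ZMod.natCast_rightInverse v).symm
      calc h v = h (v.val • (1 : ZMod N)) := by
            rw [nsmul_eq_mul, mul_one, ← h1]
        _ = v.val • u := by rw [map_nsmul]
        _ = (v.val : ZMod N) * u := by rw [nsmul_eq_mul]
        _ = u * v := by rw [← h1, mul_comm]
    have iter : ∀ n v, (⇑h)^[n] v = u ^ n * v := by
      intro n
      induction n with
      | zero => intro v; simp
      | succ n ih =>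
        intro v
        rw [Function.iterate_succ_apply', ih, key, ← mul_assoc, ← pow_succ']
    refine ⟨u, ?_, ?_⟩
    · have := hit 1
      rw [iter, mul_one] at this
      exact this
    · obtain ⟨y, hy⟩ := hbij.2 1
      simp only [key] at hy
      refine IsUnit.of_mul_eq_one y ?_
      rw [sub_mul, one_mul]
      exact hy
  · rintro ⟨u, hu, hunit⟩
    have hu' : IsUnit u := by
      refine IsUnit.of_mul_eq_one (u ^ (k - 1)) ?_
      rw [← pow_succ', Nat.sub_add_cancel hk, hu]
    refine ⟨DistribMulAction.toAddEquiv (ZMod N) hu'.unit, ?_, ?_⟩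
    · have : (fun v : ZMod N =>
          DistribMulAction.toAddEquiv (ZMod N) hu'.unit v - v)
          = fun v => hunit.unit • v := by
        funext v
        simp [DistribMulAction.toAddAut, Units.smul_def, sub_mul, one_mul]
      rw [this]
      exact MulAction.bijective hunit.unit
    · intro v
      have iter : ∀ n v, (⇑(DistribMulAction.toAddEquiv (ZMod N) hu'.unit))^[n] v
          = u ^ n * v := by
        intro n
        induction n with
        | zero => intro v; simp
        | succ n ih =>
          intro v
          rw [Function.iterate_succ_apply', ih]
          simp [DistribMulAction.toAddAut, Units.smul_def, ← mul_assoc, ← pow_succ']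
      rw [iter, hu, one_mul]

-- kernel characterization
private lemma cast_eq_zero_iff_dvd (p r : ℕ) (hp : p.Prime) (hr : 1 ≤ r)
    (x : ZMod (p ^ r)) :
    ZMod.castHom (dvd_pow_self p (Nat.one_le_iff_ne_zero.mp hr)) (ZMod p) x = 0 ↔
      (p : ZMod (p ^ r)) ∣ x := by
  haveI : NeZero (p ^ r) := ⟨pow_ne_zero _ hp.pos.ne'⟩
  have hx : x = (x.val : ZMod (p ^ r)) := (ZMod.natCast_rightInverse x).symm
  constructor
  · intro h
    rw [hx, map_natCast, ZMod.natCast_eq_zero_iff] at h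
    obtain ⟨c, hc⟩ := h
    exact ⟨(c : ZMod (p ^ r)), by rw [hx, hc]; push_cast; ring⟩
  · rintro ⟨c, hc⟩
    rw [hc, map_mul, map_natCast, ZMod.natCast_self, zero_mul]

private lemma prime_power_lemma (p r k : ℕ) (hp : p.Prime) (hr : 1 ≤ r) (hk : 1 ≤ k) :
    (∃ u : ZMod (p ^ r), u ^ k = 1 ∧ IsUnit (u - 1)) ↔
      ∃ a : ZMod p, a ≠ 1 ∧ a ^ k = 1 := by
  haveI : Fact p.Prime := ⟨hp⟩
  haveI : NeZero (p ^ r) := ⟨pow_ne_zero _ hp.pos.ne'⟩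
  have hdvd : p ∣ p ^ r := dvd_pow_self p (Nat.one_le_iff_ne_zero.mp hr)
  set φ := ZMod.castHom hdvd (ZMod p) with hφ
  -- a unit criterion
  have unit_crit : ∀ x : ZMod (p ^ r), φ x ≠ 0 → IsUnit x := by
    intro x hx
    have hxv : x = (x.val : ZMod (p ^ r)) := (ZMod.natCast_rightInverse x).symm
    rw [hxv, ZMod.isUnit_iff_coprime]
    refine Nat.Coprime.pow_right _ ?_
    rw [Nat.coprime_comm, hp.coprime_iff_not_dvd]
    intro hdvd'
    apply hx
    rw [hxv, map_natCast, ZMod.natCast_eq_zero_iff]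
    exact hdvd'
  constructor
  · rintro ⟨u, hu, hunit⟩
    refine ⟨φ u, ?_, ?_⟩
    · intro h1
      have : IsUnit (φ u - 1) := by
        have := hunit.map φ
        rwa [map_sub, map_one] at this
      rw [h1, sub_self] at this
      exact this.ne_zero rfl
    · rw [← map_pow, hu, map_one]
  · rintro ⟨a, ha1, hak⟩
    have ha0 : a ≠ 0 := by
      intro h
      rw [h, zero_pow (Nat.one_le_iff_ne_zero.mp hk)] at hak
      exact zero_ne_one hak
    set b : ZMod (p ^ r) := (a.val : ZMod (p ^ r)) with hb
    have hφb : φ b = a := by rw [hb, map_natCast, ZMod.natCast_rightInverse a]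
    set u : ZMod (p ^ r) := b ^ (p ^ (r - 1)) with hudef
    have hdvd1 : (p : ZMod (p ^ r)) ∣ b ^ k - 1 := by
      rw [← cast_eq_zero_iff_dvd p r hp hr]
      rw [map_sub, map_pow, map_one]
      show φ b ^ k - 1 = 0
      rw [hφb, hak, sub_self]
    have huk : u ^ k = 1 := by
      have h2 := dvd_sub_pow_of_dvd_sub hdvd1 (r - 1)
      rw [Nat.sub_add_cancel hr] at h2
      have hz : ((p : ZMod (p ^ r)) ^ r) = 0 := by
        have : ((p ^ r : ℕ) : ZMod (p ^ r)) = 0 := ZMod.natCast_self _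
        push_cast at this
        exact this
      rw [hz, one_pow] at h2
      have := (zero_dvd_iff.mp h2)
      rw [sub_eq_zero] at this
      rw [hudef, ← pow_mul, mul_comm, pow_mul]
      exact this
    have hφu : φ u = a ^ (p ^ (r - 1)) := by rw [hudef, map_pow, hφb]
    have hane : a ^ (p ^ (r - 1)) ≠ 1 := by
      intro h
      have hd1 : orderOf a ∣ p - 1 :=
        orderOf_dvd_of_pow_eq_one (ZMod.pow_card_sub_one_eq_one ha0)
      have hd2 : orderOf a ∣ p ^ (r - 1) := orderOf_dvd_of_pow_eq_one h
      have hcop : Nat.Coprime (orderOf a) p := by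
        rw [Nat.coprime_comm, hp.coprime_iff_not_dvd]
        intro hpd
        have : p ∣ p - 1 := hpd.trans hd1
        have h1 : p ≤ p - 1 := Nat.le_of_dvd (Nat.sub_pos_of_lt hp.one_lt) this
        have := hp.two_le
        omega
      have : orderOf a = 1 := (hcop.pow_right (r - 1)).eq_one_of_dvd hd2
      rw [orderOf_eq_one_iff] at this
      rw [this] at ha1
      exact ha1 rfl
    refine ⟨u, huk, unit_crit _ ?_⟩
    rw [map_sub, map_one, hφu, sub_ne_zero]
    exact hane

private lemma geom_equiv (p k : ℕ) (hp : p.Prime) :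
    (∃ a : ZMod p, a ≠ 1 ∧ ∑ j ∈ Finset.range k, a ^ j = 0) ↔
      ∃ a : ZMod p, a ≠ 1 ∧ a ^ k = 1 := by
  haveI : Fact p.Prime := ⟨hp⟩
  constructor
  · rintro ⟨a, ha1, hsum⟩
    refine ⟨a, ha1, ?_⟩
    have := geom_sum_mul a k
    rw [hsum, zero_mul, eq_comm, sub_eq_zero] at this
    exact this
  · rintro ⟨a, ha1, hak⟩
    refine ⟨a, ha1, ?_⟩
    have := geom_sum_mul a k
    rw [hak, sub_self, mul_eq_zero] at this
    rcases this with h | h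
    · exact h
    · exact absurd (sub_eq_zero.mp h) ha1

private lemma crt_step (m k : ℕ) (p r : Fin m → ℕ) (hp : ∀ i, (p i).Prime)
    (hdist : Function.Injective p) :
    (∃ u : ZMod (∏ i, p i ^ r i), u ^ k = 1 ∧ IsUnit (u - 1)) ↔
      ∀ i, ∃ u : ZMod (p i ^ r i), u ^ k = 1 ∧ IsUnit (u - 1) := by
  have hcop : Pairwise (Function.onFun Nat.Coprime fun i => p i ^ r i) := by
    intro i j hij
    exact ((Nat.coprime_primes (hp i) (hp j)).mpr fun h => hij (hdist h)).pow _ _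
  let e := ZMod.prodEquivPi (fun i => p i ^ r i) hcop
  constructor
  · rintro ⟨u, hu, hunit⟩ i
    refine ⟨e u i, ?_, ?_⟩
    · have : e (u ^ k) = 1 := by rw [hu, map_one]
      rw [map_pow] at this
      exact congrFun this i
    · have h1 : IsUnit (e u - 1) := by
        have := hunit.map e
        rwa [map_sub, map_one] at this
      set v : (i : Fin m) → ZMod (p i ^ r i) := ↑h1.unit⁻¹ with hv
      refine IsUnit.of_mul_eq_one (v i) ?_
      have h2 : (e u - 1) * v = 1 := h1.mul_val_inv
      have := congrFun h2 i
      simpa using this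
  · intro H
    choose u hu hunit using H
    refine ⟨e.symm u, ?_, ?_⟩
    · rw [← map_pow]
      have : u ^ k = 1 := funext fun i => by simpa using hu i
      rw [this, map_one]
    · have h1 : IsUnit (u - 1) := by
        refine IsUnit.of_mul_eq_one (fun i => ↑(hunit i).unit⁻¹) ?_
        funext i
        simp only [Pi.mul_apply, Pi.sub_apply, Pi.one_apply]
        exact (hunit i).mul_val_inv
      have h2 := h1.map e.symm
      rwa [map_sub, map_one] at h2

/-- A cyclic group of order `n = p₁^{r₁} ⋯ p_m^{r_m}` (the `p_i` distinct primes) has a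
structure of `(t−1)`-invertible `ℤ[t,t⁻¹]`-module with `t^k = id` — i.e. an automorphism `h`
with `h − id` an automorphism and `h^k = id` — iff for each `i` the polynomial
`1 + t + ⋯ + t^{k−1}` has a root `a_i ≠ 1` in `ℤ/p_iℤ`. -/
theorem cyclic_group_invertible_structure_iff
    (m k : ℕ) (hk : 1 ≤ k) (p r : Fin m → ℕ)
    (hp : ∀ i, (p i).Prime) (hr : ∀ i, 1 ≤ r i)
    (hdist : Function.Injective p) :
    (∃ h : ZMod (∏ i, p i ^ r i) ≃+ ZMod (∏ i, p i ^ r i),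
        Function.Bijective (fun v => h v - v) ∧ ∀ v, (⇑h)^[k] v = v) ↔
      ∀ i, ∃ a : ZMod (p i), a ≠ 1 ∧ ∑ j ∈ Finset.range k, a ^ j = 0 := by
  haveI : NeZero (∏ i, p i ^ r i) :=
    ⟨Finset.prod_ne_zero_iff.mpr fun i _ => pow_ne_zero _ (hp i).pos.ne'⟩
  rw [units_equiv _ k hk, crt_step m k p r hp hdist]
  refine forall_congr' fun i => ?_
  exact (prime_power_lemma (p i) (r i) k (hp i) (hr i) hk).trans
    (geom_equiv (p i) k (hp i)).symm
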